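/- Let A be a positive semidefinite symmetric d×d real matrix and let {v₁, v₂, …, v_d} be an orthonormal basis of ℝ^d. Let B be the (d-1)×(d-1) matrix with entries B_{jk} = ⟨A v_j, v_k⟩ for j,k = 2,…,d. Then det(A) ≤ ⟨A v₁, v₁⟩ · det(B). -/

import Mathlib

open scoped Matrix
open Matrix

private lemma psd_det_nonneg {m : Type*} [Fintype m] [DecidableEq m]
    {X : Matrix m m ℝ} (hX : X.PosSemidef) : 0 ≤ X.det := by
  rw [hX.isHermitian.det_eq_prod_eigenvalues]
  exact Finset.prod_nonneg fun i _ => hX.eigenvalues_nonneg i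

private lemma psd_posDef_of_det_ne_zero {m : Type*} [Fintype m] [DecidableEq m]
    {X : Matrix m m ℝ} (hX : X.PosSemidef) (h : X.det ≠ 0) : X.PosDef := by
  refine posDef_iff_dotProduct_mulVec.mpr ⟨hX.1, fun x hx => ?_⟩
  rcases (hX.dotProduct_mulVec_nonneg x).lt_or_eq with h' | h'
  · exact h'
  · exfalso
    have hz : X *ᵥ x = 0 := (hX.dotProduct_mulVec_zero_iff x).mp h'.symm
    obtain ⟨y, hy, hy0⟩ : ∃ y, y ≠ 0 ∧ X *ᵥ y = 0 := ⟨x, hx, hz⟩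
    exact h ((Matrix.exists_mulVec_eq_zero_iff).mp ⟨y, hy, hy0⟩)

/-- rank-one monotonicity of determinants on PSD matrices -/
private lemma det_le_det_add_outer {m : Type*} [Fintype m] [DecidableEq m]
    {X : Matrix m m ℝ} (hX : X.PosSemidef) (w : m → ℝ) :
    X.det ≤ (X + replicateCol Unit w * replicateRow Unit w).det := by
  have houter : (replicateCol Unit w * replicateRow Unit w).PosSemidef := by
    have := posSemidef_self_mul_conjTranspose (replicateCol Unit w)
    simpa [conjTranspose_replicateCol, star_trivial] using this
  by_cases h : IsUnit X.det
  · have hpd : X.PosDef := psd_posDef_of_det_ne_zero hX (IsUnit.ne_zero h)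
    rw [Matrix.det_add_replicateCol_mul_replicateRow h w w]
    have hsym : ∀ i j, X⁻¹ i j = X⁻¹ j i := fun i j => by
      have h := congrFun (congrFun hpd.inv.isHermitian i) j
      rw [conjTranspose_apply, star_trivial] at h
      exact h.symm
    have hq : 0 ≤ (replicateRow Unit w * X⁻¹ * replicateCol Unit w) () () := by
      have h1 : (replicateRow Unit w * X⁻¹ * replicateCol Unit w) () () = w ⬝ᵥ X⁻¹ *ᵥ w := by
        simp only [Matrix.mul_apply, dotProduct, mulVec, replicateCol_apply, replicateRow_apply,
          Finset.mul_sum, Finset.sum_mul, Fintype.sum_unique]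
        refine Finset.sum_congr rfl fun x _ => Finset.sum_congr rfl fun i _ => ?_
        rw [hsym i x]; ring
      rw [h1]
      have := hpd.inv.posSemidef.dotProduct_mulVec_nonneg w
      simpa [star_trivial] using this
    have hdet1 : (1 + replicateRow Unit w * X⁻¹ * replicateCol Unit w).det
        = 1 + (replicateRow Unit w * X⁻¹ * replicateCol Unit w) () () := by
      rw [det_unique]; simp [Matrix.add_apply, Matrix.one_apply]
    rw [hdet1]
    nlinarith [hpd.det_pos]
  · have hz : X.det = 0 := by rwa [isUnit_iff_ne_zero, not_not] at h
    rw [hz]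
    exact psd_det_nonneg (hX.add houter)

/-- Fischer-type inequality for a PSD matrix with a distinguished first index. -/
private lemma fischer_unit {q : Type*} [Fintype q] [DecidableEq q]
    (M : Matrix (Unit ⊕ q) (Unit ⊕ q) ℝ) (hM : M.PosSemidef) :
    M.det ≤ M (Sum.inl ()) (Sum.inl ()) * M.toBlocks₂₂.det := by
  set a := M.toBlocks₁₁ with ha
  set b := M.toBlocks₁₂ with hb
  set D := M.toBlocks₂₂ with hD
  have hbc : M.toBlocks₂₁ = bᴴ := by
    ext i j
    have := congrFun (congrFun hM.isHermitian (Sum.inr i)) (Sum.inl j)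
    simpa [Matrix.conjTranspose_apply, toBlocks₂₁, toBlocks₁₂, star_trivial, hb] using this.symm
  have hM' : M = fromBlocks a b bᴴ D := by
    rw [← hbc, ha, hb, hD]; exact (fromBlocks_toBlocks M).symm
  have ha0 : 0 ≤ a () () := by
    have := hM.dotProduct_mulVec_nonneg (Pi.single (Sum.inl ()) 1)
    simpa [mulVec, dotProduct, Pi.single_apply, ha, toBlocks₁₁] using this
  have haM : a () () = M (Sum.inl ()) (Sum.inl ()) := rfl
  have hDpsd : D.PosSemidef := by
    have := hM.submatrix Sum.inr
    convert this using 1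
    rfl
  rcases ha0.eq_or_lt with h0 | hpos
  · -- a = 0 : the whole determinant is 0
    have he : M *ᵥ Pi.single (Sum.inl ()) 1 = 0 := by
      apply (hM.dotProduct_mulVec_zero_iff _).mp
      have : (star (Pi.single (Sum.inl ()) 1) : Unit ⊕ q → ℝ) ⬝ᵥ
          M *ᵥ Pi.single (Sum.inl ()) 1 = M (Sum.inl ()) (Sum.inl ()) := by
        simp [mulVec, dotProduct, Pi.single_apply]
      rw [this, ← haM, ← h0]
    have hdet0 : M.det = 0 :=
      (Matrix.exists_mulVec_eq_zero_iff).mp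
        ⟨Pi.single (Sum.inl ()) 1, by simp [Pi.single_apply, funext_iff]
          , he⟩
    rw [hdet0, ← haM, ← h0, zero_mul]
  · -- a > 0 : Schur complement argument
    have hadet : a.det = a () () := det_unique a
    have haunit : IsUnit a.det := by rw [hadet]; exact (ne_of_gt hpos).isUnit
    haveI : Invertible a := a.invertibleOfIsUnitDet haunit
    have hinv : ⅟a = a⁻¹ := invOf_eq_nonsing_inv a
    have hapd : a.PosDef := by
      refine posDef_iff_dotProduct_mulVec.mpr ⟨?_, fun x hx => ?_⟩
      · ext i j; simp [Matrix.conjTranspose_apply, star_trivial]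
      · have hx0 : x () ≠ 0 := by
          intro hc; apply hx; funext i; cases i; exact hc
        have : (star x : Unit → ℝ) ⬝ᵥ a *ᵥ x = x () * x () * a () () := by
          simp [mulVec, dotProduct, star_trivial]; ring
        rw [this]
        exact mul_pos (mul_self_pos.mpr hx0) hpos
    have hSpsd : (D - bᴴ * a⁻¹ * b).PosSemidef :=
      (PosDef.fromBlocks₁₁ b D hapd).mp (hM' ▸ hM)
    have hdetM : M.det = a () () * (D - bᴴ * a⁻¹ * b).det := by
      rw [hM', det_fromBlocks₁₁, hinv, hadet]
    -- the inverse of the 1×1 matrix a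
    have hainv : a⁻¹ () () = (a () ())⁻¹ := by
      have h1 := congrFun (congrFun (Matrix.mul_nonsing_inv a haunit) ()) ()
      rw [Matrix.mul_apply, Fintype.sum_unique, Matrix.one_apply_eq] at h1
      exact eq_inv_of_mul_eq_one_right h1
    set w : q → ℝ := fun j => b () j / Real.sqrt (a () ()) with hw
    have houter : bᴴ * a⁻¹ * b = replicateCol Unit w * replicateRow Unit w := by
      ext j k
      simp only [Matrix.mul_apply, Fintype.sum_unique, replicateCol_apply, replicateRow_apply,
        conjTranspose_apply, star_trivial, hainv, hw]
      rw [div_mul_div_comm, Real.mul_self_sqrt (le_of_lt hpos)]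
      ring
    have hdetS : (D - bᴴ * a⁻¹ * b).det ≤ D.det := by
      have h1 := det_le_det_add_outer hSpsd w
      have h2 : D - bᴴ * a⁻¹ * b + replicateCol Unit w * replicateRow Unit w = D := by
        rw [← houter]; abel
      rwa [h2] at h1
    rw [hdetM, ← haM]
    exact mul_le_mul_of_nonneg_left hdetS (le_of_lt hpos)

/-- Inequality (18): for a positive semidefinite symmetric matrix `A` and an
orthonormal basis `v₀, …, v_n` of `ℝ^{n+1}`, `det A ≤ ⟨A v₀, v₀⟩ · det B`
where `B` is the compression of `A` to the span of `v₁, …, v_n`. -/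
theorem stmt_1 {n : ℕ} (A : Matrix (Fin (n + 1)) (Fin (n + 1)) ℝ)
    (hA : A.PosSemidef)
    (v : Fin (n + 1) → (Fin (n + 1) → ℝ))
    (hv : ∀ i j, v i ⬝ᵥ v j = if i = j then (1 : ℝ) else 0)
    (B : Matrix (Fin n) (Fin n) ℝ)
    (hB : ∀ j k : Fin n, B j k = A.mulVec (v j.succ) ⬝ᵥ v k.succ) :
    A.det ≤ (A.mulVec (v 0) ⬝ᵥ v 0) * B.det := by
  classical
  set V : Matrix (Fin (n+1)) (Fin (n+1)) ℝ := Matrix.of v with hVdef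
  have hVVt : V * Vᵀ = 1 := by
    ext i j
    simpa [Matrix.mul_apply, dotProduct, Matrix.one_apply, hVdef, of_apply] using hv i j
  set C : Matrix (Fin (n+1)) (Fin (n+1)) ℝ := V * A * Vᵀ with hCdef
  have hC : C.PosSemidef := by
    have := hA.mul_mul_conjTranspose_same V
    have hVH : Vᴴ = Vᵀ := by ext i j; simp [conjTranspose_apply, star_trivial]
    rwa [hVH] at this
  have hCentry : ∀ i j, C i j = A.mulVec (v j) ⬝ᵥ v i := by
    intro i j
    simp only [hCdef, Matrix.mul_apply, transpose_apply, mulVec, dotProduct, of_apply,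
      Finset.sum_mul, Finset.mul_sum]
    rw [Finset.sum_comm]
    apply Finset.sum_congr rfl
    intro k _
    apply Finset.sum_congr rfl
    intro l _
    rw [hVdef]
    simp only [of_apply]
    ring
  have hdetV : V.det * V.det = 1 := by
    have := congrArg Matrix.det hVVt
    rwa [det_mul, det_transpose, det_one] at this
  have hdetC : C.det = A.det := by
    rw [hCdef, det_mul, det_mul, det_transpose]
    have h2 : V.det * A.det * V.det = A.det * (V.det * V.det) := by ring
    rw [h2, hdetV, mul_one]
  -- transfer to `Unit ⊕ Fin n`
  set e : Unit ⊕ Fin n ≃ Fin (n+1) :=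
    { toFun := Sum.elim (fun _ => 0) Fin.succ
      invFun := Fin.cases (Sum.inl ()) Sum.inr
      left_inv := by rintro (u | i) <;> simp
      right_inv := by
        intro i
        refine Fin.cases ?_ ?_ i <;> simp }
  set M : Matrix (Unit ⊕ Fin n) (Unit ⊕ Fin n) ℝ := C.submatrix e e with hMdef
  have hMpsd : M.PosSemidef := (posSemidef_submatrix_equiv e).mpr hC
  have hMdet : M.det = C.det := det_submatrix_equiv_self e C
  have key := fischer_unit M hMpsd
  have h00 : M (Sum.inl ()) (Sum.inl ()) = A.mulVec (v 0) ⬝ᵥ v 0 := by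
    simp only [hMdef, submatrix_apply]
    exact hCentry 0 0
  have hblock : M.toBlocks₂₂ = Bᵀ := by
    ext j k
    simp only [toBlocks₂₂, of_apply, hMdef, submatrix_apply, transpose_apply]
    rw [hCentry, hB]
    rfl
  rw [hMdet, hdetC, h00, hblock, det_transpose] at key
  exact key
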